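/- For the dihedral group D_{2n} of order 2n (n ≥ 1), the total number of subgroups is |L(D_{2n})| = σ(n) + τ(n), where σ(n) is the sum of the divisors of n and τ(n) is the number of divisors of n. -/

import Mathlib

open DihedralGroup

namespace DihedralCount

variable {n : ℕ}

/-- The subgroup of `DihedralGroup n` determined by an additive subgroup `A` of rotations
and an optional coset (of reflections). -/
def dih (A : AddSubgroup (ZMod n)) (o : Option (ZMod n ⧸ A)) : Subgroup (DihedralGroup n) where
  carrier := {g | match g with
    | .r i => i ∈ A
    | .sr i => o = some (QuotientAddGroup.mk i)}
  one_mem' := A.zero_mem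
  mul_mem' := by
    rintro (a | a) (b | b) ha hb
    · exact A.add_mem ha hb
    · show o = some (QuotientAddGroup.mk (b - a))
      rw [hb, Option.some_inj, QuotientAddGroup.eq]
      have h2 : -b + (b - a) = -a := by ring
      rw [h2]; exact A.neg_mem ha
    · show o = some (QuotientAddGroup.mk (a + b))
      rw [ha, Option.some_inj, QuotientAddGroup.eq]
      have h2 : -a + (a + b) = b := by ring
      rw [h2]; exact hb
    · show (b - a) ∈ A
      have : (QuotientAddGroup.mk (s := A) a) = QuotientAddGroup.mk b := by
        rw [ha] at hb; exact Option.some_inj.mp hb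
      rw [QuotientAddGroup.eq] at this
      rwa [neg_add_eq_sub] at this
  inv_mem' := by
    rintro (a | a) ha
    · exact A.neg_mem ha
    · exact ha

lemma r_mem_dih {A : AddSubgroup (ZMod n)} {o : Option (ZMod n ⧸ A)} {i : ZMod n} :
    r i ∈ dih A o ↔ i ∈ A := Iff.rfl

lemma sr_mem_dih {A : AddSubgroup (ZMod n)} {o : Option (ZMod n ⧸ A)} {i : ZMod n} :
    sr i ∈ dih A o ↔ o = some (QuotientAddGroup.mk i) := Iff.rfl

/-- The rotation part of a subgroup of the dihedral group. -/
def toA (H : Subgroup (DihedralGroup n)) : AddSubgroup (ZMod n) where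
  carrier := {i | r i ∈ H}
  zero_mem' := by
    show r 0 ∈ H
    rw [← one_def]; exact H.one_mem
  add_mem' := by
    intro a b ha hb
    show r (a + b) ∈ H
    simpa using H.mul_mem ha hb
  neg_mem' := by
    intro a ha
    show r (-a) ∈ H
    exact H.inv_mem ha

open scoped Classical in
noncomputable def toO (H : Subgroup (DihedralGroup n)) : Option (ZMod n ⧸ toA H) :=
  if h : ∃ i, sr i ∈ H then some (QuotientAddGroup.mk h.choose) else none

/-- The classification of subgroups of the dihedral group. -/
noncomputable def dihEquiv :
    (Σ A : AddSubgroup (ZMod n), Option (ZMod n ⧸ A)) ≃ Subgroup (DihedralGroup n) where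
  toFun p := dih p.1 p.2
  invFun H := ⟨toA H, toO H⟩
  left_inv := by
    classical
    rintro ⟨A, o⟩
    have hA : toA (dih A o) = A := rfl
    refine Sigma.ext hA (heq_of_eq ?_)
    show toO (dih A o) = o
    rcases o with _ | q
    · rw [toO, dif_neg]
      · rfl
      rintro ⟨i, hi⟩
      exact Option.some_ne_none _ (sr_mem_dih.mp hi).symm
    · have h : ∃ i, sr i ∈ dih A (some q) := by
        refine ⟨q.out, ?_⟩
        rw [sr_mem_dih]
        exact congrArg some q.out_eq.symm
      rw [toO, dif_pos h]
      exact (sr_mem_dih.mp h.choose_spec).symm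
  right_inv := by
    classical
    intro H
    ext g
    show g ∈ dih (toA H) (toO H) ↔ g ∈ H
    rcases g with i | i
    · exact Iff.rfl
    · rw [sr_mem_dih, toO]
      constructor
      · intro hi
        by_cases h : ∃ j, sr j ∈ H
        · rw [dif_pos h, Option.some_inj, QuotientAddGroup.eq] at hi
          have hj := h.choose_spec
          have : sr h.choose * r (-h.choose + i) ∈ H := H.mul_mem hj hi
          simpa using this
        · rw [dif_neg h] at hi
          exact (Option.some_ne_none _ hi.symm).elim
      · intro hi
        have h : ∃ j, sr j ∈ H := ⟨i, hi⟩
        rw [dif_pos h, Option.some_inj, QuotientAddGroup.eq]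
        have : sr h.choose * sr i ∈ H := H.mul_mem h.choose_spec hi
        show r (-h.choose + i) ∈ H
        simpa [neg_add_eq_sub] using this

/-! ### Counting additive subgroups of `ZMod n` -/

/-- The kernel of multiplication by `d` on `ZMod n`. -/
def kerSmul (n d : ℕ) : AddSubgroup (ZMod n) where
  carrier := {x | d • x = 0}
  zero_mem' := smul_zero d
  add_mem' := by
    intro a b ha hb
    show d • (a + b) = 0
    rw [smul_add, ha, hb, add_zero]
  neg_mem' := by
    intro a ha
    show d • (-a) = 0
    rw [smul_neg, ha, neg_zero]

lemma card_kerSmul_le [NeZero n] {d : ℕ} (hd : 0 < d) : Nat.card (kerSmul n d) ≤ d := by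
  classical
  have := IsAddCyclic.card_nsmul_eq_zero_le (α := ZMod n) hd
  rw [Nat.card_eq_fintype_card]
  convert this using 1
  rw [← Fintype.card_coe]
  exact Fintype.card_congr (Equiv.subtypeEquivRight (by intro x; simp [kerSmul]))

lemma card_toFun_injective [NeZero n] :
    Function.Injective (fun A : AddSubgroup (ZMod n) => Nat.card A) := by
  intro A B hAB
  dsimp only at hAB
  have key : ∀ C : AddSubgroup (ZMod n), C = kerSmul n (Nat.card C) := by
    intro C
    have hpos : 0 < Nat.card C := Nat.card_pos
    have hle : C ≤ kerSmul n (Nat.card C) := by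
      intro x hx
      show (Nat.card C) • x = 0
      have : (Nat.card C) • (⟨x, hx⟩ : C) = 0 := card_nsmul_eq_zero'
      exact congrArg Subtype.val this
    have hcard : Nat.card (kerSmul n (Nat.card C)) ≤ Nat.card C :=
      card_kerSmul_le hpos
    refine le_antisymm hle ?_
    intro x hx
    have hset : (C : Set (ZMod n)) = (kerSmul n (Nat.card C) : Set (ZMod n)) := by
      refine Set.eq_of_subset_of_ncard_le hle ?_ (Set.toFinite _)
      rw [← Nat.card_coe_set_eq, ← Nat.card_coe_set_eq]
      exact hcard
    rw [← SetLike.mem_coe, hset]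
    exact hx
  rw [key A, key B, hAB]

lemma card_toFun_surjOn [NeZero n] {d : ℕ} (hd : d ∣ n) :
    ∃ A : AddSubgroup (ZMod n), Nat.card A = d := by
  refine ⟨AddSubgroup.zmultiples ((n / d : ℕ) : ZMod n), ?_⟩
  rw [Nat.card_zmultiples, ZMod.addOrderOf_coe _ (NeZero.ne n),
    Nat.gcd_eq_right (Nat.div_dvd_of_dvd hd),
    Nat.div_div_self hd (NeZero.ne n)]

noncomputable def subgroupEquivDivisors [NeZero n] :
    AddSubgroup (ZMod n) ≃ {d // d ∈ n.divisors} := by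
  refine Equiv.ofBijective
    (fun A => ⟨Nat.card A, Nat.mem_divisors.mpr ⟨?_, NeZero.ne n⟩⟩) ⟨?_, ?_⟩
  · have := AddSubgroup.card_addSubgroup_dvd_card A
    rwa [Nat.card_eq_fintype_card (α := ZMod n), ZMod.card] at this
  · intro A B h
    exact card_toFun_injective (congrArg Subtype.val h)
  · rintro ⟨d, hd⟩
    obtain ⟨A, hA⟩ := card_toFun_surjOn (Nat.mem_divisors.mp hd).1
    exact ⟨A, Subtype.ext hA⟩

lemma card_quot (A : AddSubgroup (ZMod n)) [NeZero n] :
    Nat.card (ZMod n ⧸ A) = n / Nat.card A := by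
  have h := AddSubgroup.card_eq_card_quotient_mul_card_addSubgroup A
  rw [Nat.card_eq_fintype_card (α := ZMod n), ZMod.card] at h
  exact (Nat.div_eq_of_eq_mul_left Nat.card_pos h).symm

end DihedralCount

theorem card_subgroup_dihedral (n : ℕ) (hn : 1 ≤ n) :
    Nat.card (Subgroup (DihedralGroup n)) =
      (∑ d ∈ n.divisors, d) + n.divisors.card := by
  classical
  have : NeZero n := ⟨by omega⟩
  have hfin : Finite (AddSubgroup (ZMod n)) :=
    Finite.of_injective _ SetLike.coe_injective
  have := Fintype.ofFinite (AddSubgroup (ZMod n))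
  rw [← Nat.card_congr DihedralCount.dihEquiv, Nat.card_eq_fintype_card,
    Fintype.card_sigma]
  have step : ∀ A : AddSubgroup (ZMod n),
      Fintype.card (Option (ZMod n ⧸ A)) = n / Nat.card A + 1 := by
    intro A
    rw [Fintype.card_option, ← Nat.card_eq_fintype_card, DihedralCount.card_quot]
  calc (∑ A : AddSubgroup (ZMod n), Fintype.card (Option (ZMod n ⧸ A)))
      = ∑ A : AddSubgroup (ZMod n), (n / Nat.card A + 1) :=
        Finset.sum_congr rfl (fun A _ => step A)
    _ = ∑ d : {d // d ∈ n.divisors}, (n / (d : ℕ) + 1) :=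
        Fintype.sum_equiv DihedralCount.subgroupEquivDivisors _ _ (fun A => rfl)
    _ = ∑ d ∈ n.divisors, (n / d + 1) := by exact Finset.sum_coe_sort n.divisors (fun d => n / d + 1)
    _ = (∑ d ∈ n.divisors, n / d) + ∑ _d ∈ n.divisors, 1 := Finset.sum_add_distrib
    _ = (∑ d ∈ n.divisors, d) + n.divisors.card := by
        rw [Finset.sum_const, smul_eq_mul, mul_one]
        congr 1
        exact Nat.sum_div_divisors n id
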